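/- Let X₁, X₂ and Y be Banach spaces, X := X₁ × X₂ with the maximum norm, G ⊆ X an open set, and f : G → Y a continuous mapping such that the space L(X₁, Y) of continuous linear maps is separable. Then there exists a meager set A ⊆ G such that for all x ∈ G \ A, if both partial Fréchet derivatives of f exist at x, then f is Fréchet differentiable at x. -/

import Mathlib

open Metric Set Topology Filter Asymptotics

theorem meagre_exceptional_set_partial_frechet_continuous
    {X₁ X₂ Y : Type*} [NormedAddCommGroup X₁] [NormedSpace ℝ X₁] [CompleteSpace X₁]
    [NormedAddCommGroup X₂] [NormedSpace ℝ X₂] [CompleteSpace X₂]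
    [NormedAddCommGroup Y] [NormedSpace ℝ Y] [CompleteSpace Y]
    [TopologicalSpace.SeparableSpace (X₁ →L[ℝ] Y)]
    (G : Set (X₁ × X₂)) (hG : IsOpen G) (f : X₁ × X₂ → Y) (hf : ContinuousOn f G) :
    ∃ A : Set (X₁ × X₂), A ⊆ G ∧ IsMeagre A ∧
      ∀ x ∈ G \ A,
        (DifferentiableAt ℝ (fun t : X₁ => f (t, x.2)) x.1 ∧
         DifferentiableAt ℝ (fun t : X₂ => f (x.1, t)) x.2) →
        DifferentiableAt ℝ f x := by
  obtain ⟨D, hDc, hDd⟩ := TopologicalSpace.exists_countable_dense (X₁ →L[ℝ] Y)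
  haveI := hDc.to_subtype
  set B : (X₁ →L[ℝ] Y) → ℕ → ℕ → Set (X₁ × X₂) := fun K p q =>
    {x | x ∈ G ∧ ∀ h : X₁, ‖h‖ ≤ 1 / (q + 1) → (x.1 + h, x.2) ∈ G →
      ‖f (x.1 + h, x.2) - f x - K h‖ ≤ 1 / (p + 1) * ‖h‖} with hBdef
  -- relative closedness of B in G
  have hrel : ∀ K p q, closure (B K p q) ∩ G ⊆ B K p q := by
    rintro K p q x ⟨hxc, hxG⟩
    refine ⟨hxG, fun h hh hmem => ?_⟩
    haveI hne : (𝓝[B K p q] x).NeBot := mem_closure_iff_nhdsWithin_neBot.1 hxc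
    have hcx : ContinuousAt f x := hf.continuousAt (hG.mem_nhds hxG)
    have hcx2 : ContinuousAt f (x.1 + h, x.2) := hf.continuousAt (hG.mem_nhds hmem)
    have hmap : ContinuousAt (fun y : X₁ × X₂ => (y.1 + h, y.2)) x := by fun_prop
    have hcomp : ContinuousAt (f ∘ fun y : X₁ × X₂ => (y.1 + h, y.2)) x :=
      ContinuousAt.comp (g := f) (f := fun y : X₁ × X₂ => (y.1 + h, y.2)) (x := x) hcx2 hmap
    have hcont : ContinuousAt (fun y : X₁ × X₂ => ‖f (y.1 + h, y.2) - f y - K h‖) x :=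
      ((hcomp.sub hcx).sub continuousAt_const).norm
    refine le_of_tendsto (hcont.continuousWithinAt (s := B K p q)) ?_
    have hev : ∀ᶠ y in 𝓝[B K p q] x, (y.1 + h, y.2) ∈ G :=
      (hmap.eventually_mem (hG.mem_nhds hmem)).filter_mono nhdsWithin_le_nhds
    filter_upwards [hev, self_mem_nhdsWithin] with y hyG hyB
    exact hyB.2 h hh hyG
  have hsub : ∀ K p q, B K p q \ interior (B K p q) ⊆ frontier (closure (B K p q)) := by
    intro K p q x hx
    rw [frontier, closure_closure]
    refine ⟨subset_closure hx.1, fun hxi => hx.2 ?_⟩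
    have hsub2 : interior (closure (B K p q)) ∩ G ⊆ B K p q := fun y hy =>
      hrel K p q ⟨interior_subset hy.1, hy.2⟩
    exact interior_maximal hsub2 (isOpen_interior.inter hG) ⟨hxi, hx.1.1⟩
  refine ⟨⋃ (K : D) (p : ℕ) (q : ℕ), (B K p q \ interior (B K p q)), ?_, ?_, ?_⟩
  · intro x hx
    simp only [mem_iUnion] at hx
    obtain ⟨K, p, q, hx⟩ := hx
    exact hx.1.1
  · rw [isMeagre_iff_countable_union_isNowhereDense]
    refine ⟨range (fun i : D × ℕ × ℕ => frontier (closure (B i.1 i.2.1 i.2.2))), ?_,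
      countable_range _, ?_⟩
    · rintro t ⟨i, rfl⟩
      exact isClosed_frontier.isNowhereDense_iff.2 (interior_frontier isClosed_closure)
    · intro x hx
      simp only [mem_iUnion] at hx
      obtain ⟨K, p, q, hx⟩ := hx
      exact ⟨_, ⟨⟨K, p, q⟩, rfl⟩, hsub _ _ _ hx⟩
  · rintro x ⟨hxG, hxA⟩ ⟨hd1, hd2⟩
    set T₁ := fderiv ℝ (fun t : X₁ => f (t, x.2)) x.1 with hT₁
    set T₂ := fderiv ℝ (fun t : X₂ => f (x.1, t)) x.2 with hT₂
    have h1 : HasFDerivAt (fun t : X₁ => f (t, x.2)) T₁ x.1 := hd1.hasFDerivAt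
    have h2 : HasFDerivAt (fun t : X₂ => f (x.1, t)) T₂ x.2 := hd2.hasFDerivAt
    refine HasFDerivAt.differentiableAt (f' := T₁.coprod T₂) ?_
    rw [hasFDerivAt_iff_isLittleO_nhds_zero, Asymptotics.isLittleO_iff]
    intro c hc
    obtain ⟨p, hp⟩ := exists_nat_one_div_lt (show (0:ℝ) < c/4 by linarith)
    set ε : ℝ := 1 / (p + 1) with hεdef
    have hε : 0 < ε := by positivity
    obtain ⟨K, hKD, hKdist⟩ := hDd.exists_dist_lt T₁ (half_pos hε)
    have hKT : ‖T₁ - K‖ < ε / 2 := by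
      rw [← dist_eq_norm]; exact hKdist
    have hev1 := Asymptotics.isLittleO_iff.1 (hasFDerivAt_iff_isLittleO_nhds_zero.1 h1)
      (half_pos hε)
    rw [Metric.eventually_nhds_iff] at hev1
    obtain ⟨δ₁, hδ₁, hball1⟩ := hev1
    have hev2 := Asymptotics.isLittleO_iff.1 (hasFDerivAt_iff_isLittleO_nhds_zero.1 h2)
      (half_pos hc)
    rw [Metric.eventually_nhds_iff] at hev2
    obtain ⟨δ₂, hδ₂, hball2⟩ := hev2
    obtain ⟨δG, hδG, hGball⟩ := Metric.isOpen_iff.1 hG x hxG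
    obtain ⟨q, hq⟩ := exists_nat_one_div_lt (show (0:ℝ) < min δ₁ δG by positivity)
    have hqδ₁ : 1/(q+1:ℝ) < δ₁ := lt_of_lt_of_le hq (min_le_left _ _)
    have hqδG : 1/(q+1:ℝ) < δG := lt_of_lt_of_le hq (min_le_right _ _)
    have hq0 : (0:ℝ) < 1/(q+1:ℝ) := by positivity
    -- x belongs to B K p q
    have hxB : x ∈ B K p q := by
      refine ⟨hxG, fun h hh hmem => ?_⟩
      have e1 : ‖f (x.1 + h, x.2) - f (x.1, x.2) - T₁ h‖ ≤ ε/2 * ‖h‖ := by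
        have := hball1 (y := h) (by rw [dist_zero_right]; exact lt_of_le_of_lt hh hqδ₁)
        simpa using this
      have e2 : ‖(T₁ - K) h‖ ≤ ε/2 * ‖h‖ :=
        le_trans ((T₁ - K).le_opNorm h)
          (mul_le_mul_of_nonneg_right hKT.le (norm_nonneg _))
      have eq1 : f (x.1 + h, x.2) - f x - K h
          = (f (x.1 + h, x.2) - f (x.1, x.2) - T₁ h) + (T₁ - K) h := by
        rw [Prod.mk.eta, ContinuousLinearMap.sub_apply]
        abel
      calc ‖f (x.1 + h, x.2) - f x - K h‖
          ≤ ‖f (x.1 + h, x.2) - f (x.1, x.2) - T₁ h‖ + ‖(T₁ - K) h‖ := by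
            rw [eq1]; exact norm_add_le _ _
        _ ≤ ε/2 * ‖h‖ + ε/2 * ‖h‖ := add_le_add e1 e2
        _ = 1/(p+1) * ‖h‖ := by rw [hεdef]; ring
    -- x is interior to B K p q since x ∉ A
    have hxint : x ∈ interior (B K p q) := by
      by_contra hxi
      exact hxA (mem_iUnion.2 ⟨⟨K, hKD⟩, mem_iUnion.2 ⟨p, mem_iUnion.2 ⟨q, hxB, hxi⟩⟩⟩)
    obtain ⟨r, hr, hrball⟩ := Metric.mem_nhds_iff.1 (mem_interior_iff_mem_nhds.1 hxint)
    rw [Metric.eventually_nhds_iff]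
    refine ⟨min (min r (1/(q+1))) (min δ₂ δG), by positivity, fun h hh => ?_⟩
    rw [dist_zero_right] at hh
    have hh1 : ‖h.1‖ ≤ ‖h‖ := norm_fst_le h
    have hh2 : ‖h.2‖ ≤ ‖h‖ := norm_snd_le h
    have hhr : ‖h‖ < r := lt_of_lt_of_le hh (le_trans (min_le_left _ _) (min_le_left _ _))
    have hhq : ‖h‖ ≤ 1/(q+1:ℝ) :=
      le_of_lt (lt_of_lt_of_le hh (le_trans (min_le_left _ _) (min_le_right _ _)))
    have hhδ₂ : ‖h‖ < δ₂ := lt_of_lt_of_le hh (le_trans (min_le_right _ _) (min_le_left _ _))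
    have hhδG : ‖h‖ < δG := lt_of_lt_of_le hh (le_trans (min_le_right _ _) (min_le_right _ _))
    -- the intermediate point
    have hyB : (x.1, x.2 + h.2) ∈ B K p q := by
      apply hrball
      rw [mem_ball, Prod.dist_eq]
      simp only [dist_self, dist_eq_norm, add_sub_cancel_left]
      rw [max_eq_right (norm_nonneg _)]
      exact lt_of_le_of_lt hh2 hhr
    have hmemG : (x.1 + h.1, x.2 + h.2) ∈ G := by
      apply hGball
      rw [mem_ball, Prod.dist_eq]
      simp only [dist_eq_norm, add_sub_cancel_left]
      exact max_lt (lt_of_le_of_lt hh1 hhδG) (lt_of_le_of_lt hh2 hhδG)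
    have e1 : ‖f (x.1 + h.1, x.2 + h.2) - f (x.1, x.2 + h.2) - K h.1‖ ≤ ε * ‖h.1‖ := by
      have := hyB.2 h.1 (le_trans hh1 hhq) hmemG
      calc ‖f (x.1 + h.1, x.2 + h.2) - f (x.1, x.2 + h.2) - K h.1‖
          ≤ 1/(p+1) * ‖h.1‖ := this
        _ = ε * ‖h.1‖ := by rw [hεdef]
    have e2 : ‖(K - T₁) h.1‖ ≤ ε/2 * ‖h.1‖ := by
      refine le_trans ((K - T₁).le_opNorm h.1) (mul_le_mul_of_nonneg_right ?_ (norm_nonneg _))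
      rw [norm_sub_rev]; exact hKT.le
    have e3 : ‖f (x.1, x.2 + h.2) - f (x.1, x.2) - T₂ h.2‖ ≤ c/2 * ‖h.2‖ := by
      have := hball2 (y := h.2) (by rw [dist_zero_right]; exact lt_of_le_of_lt hh2 hhδ₂)
      simpa using this
    have eq1 : f (x + h) - f x - (T₁.coprod T₂) h
        = (f (x.1 + h.1, x.2 + h.2) - f (x.1, x.2 + h.2) - K h.1)
          + (K - T₁) h.1 + (f (x.1, x.2 + h.2) - f (x.1, x.2) - T₂ h.2) := by
      have hx_eta : (x.1, x.2) = x := Prod.mk.eta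
      have hxh : x + h = (x.1 + h.1, x.2 + h.2) := rfl
      rw [hxh, hx_eta, ContinuousLinearMap.coprod_apply, ContinuousLinearMap.sub_apply]
      abel
    have hεc : ε < c/4 := hp
    calc ‖f (x + h) - f x - (T₁.coprod T₂) h‖
        ≤ ‖f (x.1 + h.1, x.2 + h.2) - f (x.1, x.2 + h.2) - K h.1‖
          + ‖(K - T₁) h.1‖ + ‖f (x.1, x.2 + h.2) - f (x.1, x.2) - T₂ h.2‖ := by
          rw [eq1]; exact le_trans (norm_add_le _ _) (add_le_add (norm_add_le _ _) le_rfl)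
      _ ≤ ε * ‖h.1‖ + ε/2 * ‖h.1‖ + c/2 * ‖h.2‖ := add_le_add (add_le_add e1 e2) e3
      _ ≤ ε * ‖h‖ + ε/2 * ‖h‖ + c/2 * ‖h‖ :=
          add_le_add (add_le_add (mul_le_mul_of_nonneg_left hh1 hε.le)
            (mul_le_mul_of_nonneg_left hh1 (by positivity)))
            (mul_le_mul_of_nonneg_left hh2 (by positivity))
      _ = (ε + ε/2 + c/2) * ‖h‖ := by ring
      _ ≤ c * ‖h‖ := mul_le_mul_of_nonneg_right (by linarith) (norm_nonneg h)
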